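/- Let n ≥ 1 and let H : ℝ × ℝⁿ → ℝ be a C² function such that the spatial Hessian of H is pointwise a scalar multiple of the identity: ∂²H/∂xᵢ∂xⱼ(u,x) = 2φ(u,x)·δᵢⱼ for some function φ, with n ≥ 2. Then φ depends only on u, and H(u,x) = a(u)·Σᵢ xᵢ² + Σᵢ bᵢ(u)·xᵢ + c(u) for some functions a, bᵢ, c of u alone. -/

import Mathlib

/-- Spatial partial derivative in the `i`-th coordinate. -/
noncomputable def pd {n : ℕ} (i : Fin n) (F : (Fin n → ℝ) → ℝ) : (Fin n → ℝ) → ℝ :=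
  fun x => deriv (fun t => F (Function.update x i t)) (x i)

open Finset Function

namespace Stmt9Aux

variable {n : ℕ}

lemma clm_sum (f : (Fin n → ℝ) →L[ℝ] ℝ) (w : Fin n → ℝ) :
    f w = ∑ i, w i * f (Pi.single i 1) := by
  have hw : w = ∑ i, w i • (Pi.single i 1 : Fin n → ℝ) := by
    ext j
    rw [Finset.sum_apply]
    simp [Pi.single_apply]
  conv_lhs => rw [hw]
  rw [map_sum]
  simp [smul_eq_mul]

lemma hasDerivAt_comp_update {F : (Fin n → ℝ) → ℝ} {x : Fin n → ℝ}
    (hF : DifferentiableAt ℝ F x) (i : Fin n) :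
    HasDerivAt (fun t => F (Function.update x i t)) (fderiv ℝ F x (Pi.single i 1)) (x i) := by
  have hc : HasDerivAt (Function.update x i) (Pi.single i (1:ℝ)) (x i) :=
    hasDerivAt_update x i (x i)
  have hF' : HasFDerivAt F (fderiv ℝ F x) (Function.update x i (x i)) := by
    rw [Function.update_eq_self]; exact hF.hasFDerivAt
  exact hF'.comp_hasDerivAt (x i) hc

lemma pd_eq_fderiv {F : (Fin n → ℝ) → ℝ} {x : Fin n → ℝ}
    (hF : DifferentiableAt ℝ F x) (i : Fin n) :
    pd i F x = fderiv ℝ F x (Pi.single i 1) :=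
  (hasDerivAt_comp_update hF i).deriv

lemma const_of_pd_zero {g : (Fin n → ℝ) → ℝ} (hg : Differentiable ℝ g)
    (h0 : ∀ x i, fderiv ℝ g x (Pi.single i 1) = 0) : ∀ x y, g x = g y := by
  apply is_const_of_fderiv_eq_zero hg
  intro x
  ext w
  rw [ContinuousLinearMap.zero_apply, clm_sum]
  simp [h0]

noncomputable def projL (j : Fin n) : (Fin n → ℝ) →L[ℝ] (Fin n → ℝ) :=
  ContinuousLinearMap.pi (fun i => if i = j then 0 else ContinuousLinearMap.proj i)

lemma projL_apply (j : Fin n) (y : Fin n → ℝ) (i : Fin n) :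
    projL j y i = if i = j then 0 else y i := by
  by_cases h : i = j <;> simp [projL, h]

lemma update_eq (z : Fin n → ℝ) (j : Fin n) (s : ℝ) :
    Function.update z j s = projL j z + Pi.single j s := by
  ext i
  by_cases h : i = j <;>
    simp [projL_apply, Function.update_apply, h, Pi.single_apply]

lemma dep_only {g : (Fin n → ℝ) → ℝ} (hg : Differentiable ℝ g) (j : Fin n)
    (h0 : ∀ x i, i ≠ j → fderiv ℝ g x (Pi.single i 1) = 0) :
    ∀ x y, x j = y j → g x = g y := by
  intro x y hxy
  obtain ⟨s, hs, hs'⟩ : ∃ s, x j = s ∧ y j = s := ⟨x j, rfl, hxy.symm⟩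
  have hA : ∀ z : Fin n → ℝ, HasFDerivAt (fun z => Function.update z j s)
      ((projL j : (Fin n → ℝ) →L[ℝ] (Fin n → ℝ))) z := by
    intro z
    have : (fun z : Fin n → ℝ => Function.update z j s)
        = fun z => projL j z + Pi.single j s := funext fun z => update_eq z j s
    rw [this]
    exact (projL j).hasFDerivAt.add_const _
  have hk : ∀ z : Fin n → ℝ, HasFDerivAt (fun z => g (Function.update z j s))
      ((fderiv ℝ g (Function.update z j s)).comp (projL j)) z := fun z =>
    (hg _).hasFDerivAt.comp z (hA z)
  have hconst : ∀ z w : Fin n → ℝ,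
      g (Function.update z j s) = g (Function.update w j s) := by
    apply const_of_pd_zero (fun z => (hk z).differentiableAt)
    intro z i
    rw [(hk z).fderiv]
    simp only [ContinuousLinearMap.comp_apply]
    have hP : projL j (Pi.single i 1) = if i = j then 0 else Pi.single i 1 := by
      ext m
      rw [projL_apply]
      rcases eq_or_ne i j with hij | hij
      · subst hij
        rcases eq_or_ne m i with hm | hm <;> simp [hm, Pi.single_apply]
      · simp only [if_neg hij]
        rcases eq_or_ne m j with hm | hm
        · simp [hm, Pi.single_apply, Ne.symm hij]
        · simp [hm]
    rw [hP]
    by_cases hij : i = j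
    · simp [hij]
    · simp [hij, h0 _ _ hij]
  have h1 : g x = g (Function.update x j s) := by rw [← hs, Function.update_eq_self]
  have h2 : g y = g (Function.update y j s) := by rw [← hs', Function.update_eq_self]
  rw [h1, h2]; exact hconst x y

end Stmt9Aux
open Finset in
theorem stmt_9 (n : ℕ) (hn : 2 ≤ n) (H : ℝ → (Fin n → ℝ) → ℝ)
    (hC2 : ContDiff ℝ 2 (fun p : ℝ × (Fin n → ℝ) => H p.1 p.2))
    (φ : ℝ → (Fin n → ℝ) → ℝ)
    (hHess : ∀ (u : ℝ) (x : Fin n → ℝ) (i j : Fin n),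
      pd i (pd j (H u)) x = 2 * φ u x * (if i = j then 1 else 0)) :
    (∀ (u : ℝ) (x y : Fin n → ℝ), φ u x = φ u y) ∧
    ∃ (a c : ℝ → ℝ) (b : Fin n → ℝ → ℝ), ∀ (u : ℝ) (x : Fin n → ℝ),
      φ u x = a u ∧ H u x = a u * ∑ i, (x i) ^ 2 + ∑ i, b i u * x i + c u := by
  classical
  have hFu : ∀ u : ℝ, ContDiff ℝ 2 (H u) := by
    intro u
    exact hC2.comp (ContDiff.prodMk (contDiff_const (c := u)) contDiff_id)
  have hdF : ∀ u, Differentiable ℝ (H u) := fun u => (hFu u).differentiable (by norm_num)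
  have hC1pd : ∀ (u : ℝ) (j : Fin n), ContDiff ℝ 1 (pd j (H u)) := by
    intro u j
    have heq : pd j (H u) = fun x => fderiv ℝ (H u) x (Pi.single j 1) :=
      funext fun x => Stmt9Aux.pd_eq_fderiv ((hdF u) x) j
    rw [heq]
    exact ((hFu u).fderiv_right (m := 1) (by norm_num)).clm_apply contDiff_const
  have hdpd : ∀ u j, Differentiable ℝ (pd j (H u)) :=
    fun u j => (hC1pd u j).differentiable (by norm_num)
  have h2 : ∀ (u : ℝ) (x : Fin n → ℝ) (i j : Fin n),
      fderiv ℝ (pd j (H u)) x (Pi.single i 1) = 2 * φ u x * (if i = j then 1 else 0) := by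
    intro u x i j
    rw [← Stmt9Aux.pd_eq_fderiv ((hdpd u j) x) i]
    exact hHess u x i j
  have hdep : ∀ (u : ℝ) (j : Fin n) (x y : Fin n → ℝ), x j = y j →
      pd j (H u) x = pd j (H u) y := fun u j =>
    Stmt9Aux.dep_only (hdpd u j) j (fun x i hij => by rw [h2]; simp [hij])
  have keyj : ∀ (u : ℝ) (j : Fin n) (z w : Fin n → ℝ), z j = w j → φ u z = φ u w := by
    intro u j z w hzw
    have h1 := hHess u z j j
    have h2' := hHess u w j j
    simp only [eq_self_iff_true, if_true, mul_one] at h1 h2'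
    have hfun : (fun t => pd j (H u) (Function.update z j t))
        = fun t => pd j (H u) (Function.update w j t) :=
      funext fun t => hdep u j _ _ (by simp)
    have heq : pd j (pd j (H u)) z = pd j (pd j (H u)) w := by
      show deriv (fun t => pd j (H u) (Function.update z j t)) (z j)
          = deriv (fun t => pd j (H u) (Function.update w j t)) (w j)
      rw [hfun, hzw]
    rw [h1, h2'] at heq
    linarith
  have hφconst : ∀ (u : ℝ) (x y : Fin n → ℝ), φ u x = φ u y := by
    intro u x y
    have hij : (⟨0, by omega⟩ : Fin n) ≠ ⟨1, by omega⟩ := Fin.ne_of_val_ne (by norm_num)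
    set i : Fin n := ⟨0, by omega⟩
    set j : Fin n := ⟨1, by omega⟩
    calc φ u x = φ u (Function.update x i (y i)) :=
          keyj u j _ _ (Function.update_of_ne (Ne.symm hij) _ _).symm
      _ = φ u y := keyj u i _ _ (by simp)
  have hpd1 : ∀ (u : ℝ) (i : Fin n) (x : Fin n → ℝ),
      pd i (H u) x = 2 * φ u 0 * x i + pd i (H u) 0 := by
    intro u i x
    have hψdiff : Differentiable ℝ (fun t => pd i (H u) (Function.update x i t)) :=
      fun t => DifferentiableAt.comp t ((hdpd u i) _)
        (hasDerivAt_update x i t).differentiableAt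
    have hψderiv : ∀ t, deriv (fun s => pd i (H u) (Function.update x i s)) t
        = 2 * φ u 0 := by
      intro t
      have h := hHess u (Function.update x i t) i i
      simp only [eq_self_iff_true, if_true, mul_one] at h
      have heq : pd i (pd i (H u)) (Function.update x i t)
          = deriv (fun s => pd i (H u) (Function.update x i s)) t := by
        simp only [pd, Function.update_idem, Function.update_self]
      rw [heq] at h
      rw [h, hφconst u _ 0]
    have hχ : ∀ t : ℝ, HasDerivAt
        (fun s => pd i (H u) (Function.update x i s) - 2 * φ u 0 * s) 0 t := by
      intro t
      have h1 : HasDerivAt (fun s => pd i (H u) (Function.update x i s)) (2 * φ u 0) t := by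
        have h := (hψdiff t).hasDerivAt
        rwa [hψderiv t] at h
      have h2' : HasDerivAt (fun s : ℝ => 2 * φ u 0 * s) (2 * φ u 0) t := by
        simpa using (hasDerivAt_id t).const_mul (2 * φ u 0)
      simpa using h1.fun_sub h2'
    have hconst := is_const_of_deriv_eq_zero (fun t => (hχ t).differentiableAt)
      (fun t => (hχ t).deriv) (x i) 0
    rw [Function.update_eq_self] at hconst
    have h0' : pd i (H u) (Function.update x i 0) = pd i (H u) 0 :=
      hdep u i _ _ (by simp)
    rw [h0'] at hconst
    linarith [hconst]
  refine ⟨hφconst, fun u => φ u 0, fun u => H u 0, fun i u => pd i (H u) 0, ?_⟩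
  intro u x
  refine ⟨hφconst u x 0, ?_⟩
  set G : (Fin n → ℝ) → ℝ :=
    fun y => H u y - φ u 0 * ∑ k, (y k)^2 - ∑ k, pd k (H u) 0 * y k with hG
  have hq : Differentiable ℝ (fun y : Fin n → ℝ => φ u 0 * ∑ k, (y k)^2) := by
    apply Differentiable.const_mul
    apply Differentiable.fun_sum
    intro k _
    exact ((ContinuousLinearMap.proj k : (Fin n → ℝ) →L[ℝ] ℝ).differentiable).pow 2
  have hl : Differentiable ℝ (fun y : Fin n → ℝ => ∑ k, pd k (H u) 0 * y k) := by
    apply Differentiable.fun_sum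
    intro k _
    exact (ContinuousLinearMap.proj k : (Fin n → ℝ) →L[ℝ] ℝ).differentiable.const_mul _
  have hGd : Differentiable ℝ G := ((hdF u).sub hq).sub hl
  have hpdG : ∀ (y : Fin n → ℝ) (i : Fin n), fderiv ℝ G y (Pi.single i 1) = 0 := by
    intro y i
    rw [← Stmt9Aux.pd_eq_fderiv (hGd y) i]
    have hsum : ∀ t : ℝ, ∑ k, (Function.update y i t k)^2
        = t^2 + ∑ k ∈ univ \ {i}, (y k)^2 := by
      intro t
      calc ∑ k, (Function.update y i t k)^2
          = ∑ k, Function.update (fun k => (y k)^2) i (t^2) k :=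
            Finset.sum_congr rfl fun k _ => (Function.apply_update (fun _ s => s^2) y i t k)
        _ = t^2 + ∑ k ∈ univ \ {i}, (y k)^2 :=
            Finset.sum_update_of_mem (Finset.mem_univ i) _ _
    have hsuml : ∀ t : ℝ, ∑ k, pd k (H u) 0 * (Function.update y i t k)
        = pd i (H u) 0 * t + ∑ k ∈ univ \ {i}, pd k (H u) 0 * y k := by
      intro t
      calc ∑ k, pd k (H u) 0 * (Function.update y i t k)
          = ∑ k, Function.update (fun k => pd k (H u) 0 * y k) i (pd i (H u) 0 * t) k :=
            Finset.sum_congr rfl fun k _ =>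
              (Function.apply_update (fun k s => pd k (H u) 0 * s) y i t k)
        _ = _ := Finset.sum_update_of_mem (Finset.mem_univ i) _ _
    have hc1 : HasDerivAt (fun t => H u (Function.update y i t))
        (2 * φ u 0 * y i + pd i (H u) 0) (y i) := by
      have h := Stmt9Aux.hasDerivAt_comp_update ((hdF u) y) i
      rwa [← Stmt9Aux.pd_eq_fderiv ((hdF u) y) i, hpd1 u i y] at h
    have hc2 : HasDerivAt (fun t => φ u 0 * ∑ k, (Function.update y i t k)^2)
        (2 * φ u 0 * y i) (y i) := by
      have heq : (fun t => φ u 0 * ∑ k, (Function.update y i t k)^2)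
          = fun t => φ u 0 * (t^2 + ∑ k ∈ univ \ {i}, (y k)^2) :=
        funext fun t => by rw [hsum t]
      rw [heq]
      have h := ((hasDerivAt_pow 2 (y i)).add_const (∑ k ∈ univ \ {i}, (y k)^2)).const_mul
        (φ u 0)
      convert h using 1
      · rfl
      · rfl
      · simp; ring
    have hc3 : HasDerivAt (fun t => ∑ k, pd k (H u) 0 * Function.update y i t k)
        (pd i (H u) 0) (y i) := by
      have heq : (fun t => ∑ k, pd k (H u) 0 * Function.update y i t k)
          = fun t => pd i (H u) 0 * t + ∑ k ∈ univ \ {i}, pd k (H u) 0 * y k :=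
        funext fun t => hsuml t
      rw [heq]
      simpa using ((hasDerivAt_id (y i)).const_mul (pd i (H u) 0)).add_const
        (∑ k ∈ univ \ {i}, pd k (H u) 0 * y k)
    have hd := (hc1.sub hc2).sub hc3
    have h0 : (2 * φ u 0 * y i + pd i (H u) 0 - 2 * φ u 0 * y i) - pd i (H u) 0 = 0 := by ring
    rw [h0] at hd
    exact hd.deriv
  have hG0 := Stmt9Aux.const_of_pd_zero hGd hpdG x 0
  rw [hG] at hG0
  simp only [Pi.zero_apply, mul_zero, sum_const_zero, ne_eq, OfNat.ofNat_ne_zero,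
    not_false_eq_true, zero_pow, sub_zero] at hG0
  linarith [hG0]
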